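/- Let (M, R) and (N, L) be Noetherian confluent MRS with normal-form functions nf_R and nf_L, and let φ : (M, R) → (N, L) be an MRS-homomorphism. Then the map φ♯ sending an irreducible u ∈ M to nf_L (φ u) is a monoid homomorphism between the monoids of irreducibles: for all irreducible a, b ∈ M, nf_L (φ (nf_R (a*b))) = nf_L (nf_L (φ a) * nf_L (φ b)), and nf_L (φ (nf_R 1)) = nf_L 1. -/
import Mathlib


namespace MRS

/-- One-step rewriting relation of an MRS `(M, R)`. -/
def Step {M : Type*} [Monoid M] (R : M → M → Prop) (a b : M) : Prop :=
  ∃ x y s t : M, a = x * s * y ∧ b = x * t * y ∧ R s t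

/-- An element is irreducible for a relation if it only rewrites to itself. -/
def IrredRel {α : Type*} (r : α → α → Prop) (a : α) : Prop :=
  ∀ b, r a b → a = b

/-- A relation is Noetherian if there is no infinite chain of non-trivial steps. -/
def NoetherianRel {α : Type*} (r : α → α → Prop) : Prop :=
  ¬ ∃ f : ℕ → α, ∀ n, r (f n) (f (n + 1)) ∧ f n ≠ f (n + 1)

/-- Confluence of a relation. -/
def ConfluentRel {α : Type*} (r : α → α → Prop) : Prop :=
  ∀ u a b : α, Relation.ReflTransGen r u a → Relation.ReflTransGen r u b →
    ∃ c, Relation.ReflTransGen r a c ∧ Relation.ReflTransGen r b c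

/-- `nf` is a normal-form function for the MRS `(M, R)`. -/
def IsNF {M : Type*} [Monoid M] (R : M → M → Prop) (nf : M → M) : Prop :=
  ∀ u, Relation.ReflTransGen (Step R) u (nf u) ∧ IrredRel (Step R) (nf u)

end MRS

open MRS

private lemma step_mul {N : Type*} [Monoid N] (L : N → N → Prop) {a b : N} (x y : N)
    (h : Step L a b) : Step L (x * a * y) (x * b * y) := by
  obtain ⟨p, q, s, t, ha, hb, hst⟩ := h
  exact ⟨x * p, q * y, s, t, by rw [ha]; group, by rw [hb]; group, hst⟩

private lemma rtg_mul {N : Type*} [Monoid N] (L : N → N → Prop) {a b : N} (x y : N)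
    (h : Relation.ReflTransGen (Step L) a b) :
    Relation.ReflTransGen (Step L) (x * a * y) (x * b * y) := by
  induction h with
  | refl => exact .refl
  | tail _ hs ih => exact ih.tail (step_mul L x y hs)

private lemma rtg_mul_both {N : Type*} [Monoid N] (L : N → N → Prop) {a b c d : N}
    (h1 : Relation.ReflTransGen (Step L) a b) (h2 : Relation.ReflTransGen (Step L) c d) :
    Relation.ReflTransGen (Step L) (a * c) (b * d) := by
  have h1' := rtg_mul L 1 c h1
  have h2' := rtg_mul L b 1 h2
  simp at h1' h2'
  exact h1'.trans h2'

private lemma irred_rtg {α : Type*} {r : α → α → Prop} {a b : α}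
    (ha : IrredRel r a) (h : Relation.ReflTransGen r a b) : a = b := by
  induction h with
  | refl => rfl
  | tail _ hs ih => exact ha _ (ih.symm ▸ hs)

private lemma nf_eq_of_rtg {N : Type*} [Monoid N] {L : N → N → Prop}
    (hConfL : ConfluentRel (Step L)) {nfL : N → N} (hnfL : IsNF L nfL) {u v : N}
    (h : Relation.ReflTransGen (Step L) u v) : nfL u = nfL v := by
  obtain ⟨c, hc1, hc2⟩ := hConfL u (nfL u) (nfL v) (hnfL u).1 (h.trans (hnfL v).1)
  exact (irred_rtg (hnfL u).2 hc1).trans (irred_rtg (hnfL v).2 hc2).symm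

private lemma phi_rtg {M N : Type*} [Monoid M] [Monoid N] {R : M → M → Prop}
    {L : N → N → Prop} (φ : M →* N)
    (hφ : ∀ u v : M, R u v → Relation.ReflTransGen (Step L) (φ u) (φ v))
    {a b : M} (h : Relation.ReflTransGen (Step R) a b) :
    Relation.ReflTransGen (Step L) (φ a) (φ b) := by
  induction h with
  | refl => exact .refl
  | tail _ hs ih =>
    obtain ⟨x, y, s, t, ha, hb, hst⟩ := hs
    refine ih.trans ?_
    rw [ha, hb, map_mul, map_mul, map_mul, map_mul]
    exact rtg_mul L (φ x) (φ y) (hφ s t hst)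

/-- `φ♯ : u ↦ nf_L (φ u)` is a monoid homomorphism between the monoids of
irreducibles. -/
theorem stmt_6 {M N : Type*} [Monoid M] [Monoid N]
    (R : M → M → Prop) (L : N → N → Prop)
    (hNoethR : NoetherianRel (Step R)) (hConfR : ConfluentRel (Step R))
    (hNoethL : NoetherianRel (Step L)) (hConfL : ConfluentRel (Step L))
    (nfR : M → M) (hnfR : IsNF R nfR) (nfL : N → N) (hnfL : IsNF L nfL)
    (φ : M →* N)
    (hφ : ∀ u v : M, R u v → Relation.ReflTransGen (Step L) (φ u) (φ v)) :
    (∀ a b : M, IrredRel (Step R) a → IrredRel (Step R) b →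
      nfL (φ (nfR (a * b))) = nfL (nfL (φ a) * nfL (φ b))) ∧
    nfL (φ (nfR 1)) = nfL 1 := by
  constructor
  · intro a b _ _
    have h1 : nfL (φ (nfR (a * b))) = nfL (φ (a * b)) :=
      (nf_eq_of_rtg hConfL hnfL (phi_rtg φ hφ (hnfR (a * b)).1)).symm
    have h2 : nfL (φ (a * b)) = nfL (nfL (φ a) * nfL (φ b)) := by
      rw [map_mul]
      exact nf_eq_of_rtg hConfL hnfL (rtg_mul_both L (hnfL (φ a)).1 (hnfL (φ b)).1)
    exact h1.trans h2
  · have h1 : nfL (φ (nfR 1)) = nfL (φ 1) :=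
      (nf_eq_of_rtg hConfL hnfL (phi_rtg φ hφ (hnfR 1).1)).symm
    rw [h1, map_one]
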